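/- arXiv:2110.15587 — 3 statements merged into one kernel-verified Lean document; each statement's English description precedes it below -/
import Mathlib

section
/- Let G = (V, w_G) be a weighted graph, 0 < ε < 1/3, H an ε-cut sparsifier of G, F a maximum s-t flow in H of value f_H, and H' the graph with weights w_H(e) − F(e). Then for every minimum s-t cut Δ_G(X) of G (with s ∈ X, t ∉ X), the residual cut weight satisfies w_{H'}(Δ(X)) ≤ (2ε/(1−ε))·f_H. -/
open Finset

variable {V : Type*} [Fintype V] [DecidableEq V]

/-- Total weight of the cut determined by shore `X`. -/
def cutWeight (w : V → V → ℝ) (X : Finset V) : ℝ :=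
  ∑ u ∈ X, ∑ v ∈ Xᶜ, w u v

/-- Minimum `s`-`t` cut value. -/
noncomputable def minCut (w : V → V → ℝ) (s t : V) : ℝ :=
  sInf {r : ℝ | ∃ X : Finset V, s ∈ X ∧ t ∉ X ∧ cutWeight w X = r}

theorem stmt3 (wG wH : V → V → ℝ) (ε : ℝ) (hε0 : 0 < ε) (hε1 : ε < 1/3)
    (hGsymm : ∀ u v, wG u v = wG v u) (hGnn : ∀ u v, 0 ≤ wG u v)
    (hHsymm : ∀ u v, wH u v = wH v u) (hHnn : ∀ u v, 0 ≤ wH u v)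
    (hsub : ∀ u v, 0 < wH u v → 0 < wG u v)
    (hsparsify : ∀ X : Finset V,
      (1 - ε) * cutWeight wG X ≤ cutWeight wH X ∧
        cutWeight wH X ≤ (1 + ε) * cutWeight wG X)
    (s t : V) (hst : s ≠ t)
    -- `F` is a maximum `s`-`t` flow in `H`, in skew-symmetric representation
    (f : V → V → ℝ)
    (hskew : ∀ u v, f u v = - f v u)
    (hcap : ∀ u v, |f u v| ≤ wH u v)
    (hcons : ∀ u, u ≠ s → u ≠ t → ∑ v, f u v = 0)
    (fH : ℝ) (hval : ∑ v, f s v = fH)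
    (hmaxflow : fH = minCut wH s t)
    -- `X` is the shore of a minimum `s`-`t` cut of `G`
    (X : Finset V) (hsX : s ∈ X) (htX : t ∉ X)
    (hmincut : cutWeight wG X = minCut wG s t) :
    cutWeight (fun u v => wH u v - |f u v|) X ≤ (2 * ε / (1 - ε)) * fH := by
  have hε1' : (0:ℝ) < 1 - ε := by linarith
  -- flow across the cut equals fH
  have hinner : ∑ u ∈ X, ∑ v ∈ X, f u v = 0 := by
    have : ∑ u ∈ X, ∑ v ∈ X, f u v = ∑ v ∈ X, ∑ u ∈ X, f u v := Finset.sum_comm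
    have h2 : ∑ u ∈ X, ∑ v ∈ X, f u v = - ∑ u ∈ X, ∑ v ∈ X, f u v := by
      calc ∑ u ∈ X, ∑ v ∈ X, f u v = ∑ v ∈ X, ∑ u ∈ X, f u v := Finset.sum_comm
        _ = ∑ v ∈ X, ∑ u ∈ X, - f v u := by
            refine Finset.sum_congr rfl fun v _ => Finset.sum_congr rfl fun u _ => hskew u v
        _ = - ∑ u ∈ X, ∑ v ∈ X, f u v := by simp [Finset.sum_neg_distrib]
    linarith
  have hrows : ∑ u ∈ X, ∑ v, f u v = fH := by
    rw [Finset.sum_eq_single_of_mem s hsX]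
    · exact hval
    · intro u hu hus
      exact hcons u hus (fun h => htX (h ▸ hu))
  have hcross : ∑ u ∈ X, ∑ v ∈ Xᶜ, f u v = fH := by
    have : ∑ u ∈ X, (∑ v ∈ X, f u v + ∑ v ∈ Xᶜ, f u v) = fH := by
      have := hrows
      simpa [Finset.sum_add_sum_compl] using this
    rw [Finset.sum_add_distrib] at this
    linarith [hinner]
  -- cut set nonempty / bounds
  have hbddG : BddBelow {r : ℝ | ∃ Y : Finset V, s ∈ Y ∧ t ∉ Y ∧ cutWeight wG Y = r} := by
    refine ⟨0, fun r hr => ?_⟩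
    obtain ⟨Y, _, _, hY⟩ := hr
    rw [← hY]
    exact Finset.sum_nonneg fun u _ => Finset.sum_nonneg fun v _ => hGnn u v
  have hne : {r : ℝ | ∃ Y : Finset V, s ∈ Y ∧ t ∉ Y ∧ cutWeight wH Y = r}.Nonempty :=
    ⟨cutWeight wH X, X, hsX, htX, rfl⟩
  -- (1-ε) * minCut wG ≤ fH
  have hkey : (1 - ε) * minCut wG s t ≤ fH := by
    rw [hmaxflow]
    refine le_csInf hne ?_
    rintro r ⟨Y, hsY, htY, rfl⟩
    have h1 : (1 - ε) * cutWeight wG Y ≤ cutWeight wH Y := (hsparsify Y).1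
    have h2 : minCut wG s t ≤ cutWeight wG Y :=
      csInf_le hbddG ⟨Y, hsY, htY, rfl⟩
    nlinarith
  have hfHnn : 0 ≤ fH := by
    rw [hmaxflow]
    refine le_csInf hne ?_
    rintro r ⟨Y, _, _, rfl⟩
    exact Finset.sum_nonneg fun u _ => Finset.sum_nonneg fun v _ => hHnn u v
  have hupper : cutWeight wH X ≤ (1 + ε) * minCut wG s t := by
    have := (hsparsify X).2
    rw [hmincut] at this
    exact this
  have habs : fH ≤ ∑ u ∈ X, ∑ v ∈ Xᶜ, |f u v| := by
    rw [← hcross]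
    exact Finset.sum_le_sum fun u _ => Finset.sum_le_sum fun v _ => le_abs_self _
  have hexpand : cutWeight (fun u v => wH u v - |f u v|) X
      = cutWeight wH X - ∑ u ∈ X, ∑ v ∈ Xᶜ, |f u v| := by
    simp [cutWeight, Finset.sum_sub_distrib]
  rw [hexpand]
  have hmc : (1 + ε) * minCut wG s t ≤ (1 + ε) * (fH / (1 - ε)) := by
    have : minCut wG s t ≤ fH / (1 - ε) := by
      rw [le_div_iff₀ hε1']
      linarith [hkey]
    nlinarith
  have : (1 + ε) * (fH / (1 - ε)) - fH = (2 * ε / (1 - ε)) * fH := by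
    field_simp
    ring
  linarith
end

section
/- Let G be the graph of the previous construction (s joined to clique A, t joined to clique B, A and B disjoint of equal size p ≥ 2). For distinct a_1, a_2 ∈ A and distinct b_1, b_2 ∈ B, let G' be obtained from G by removing edges {a_1, a_2} and {b_1, b_2} and adding edges {a_1, b_1} and {a_2, b_2}. Then s and t are connected in G', every vertex of A ∪ B still has degree p, and the minimum s-t cut value of G' equals 2. -/
open Finset
open scoped Classical

private lemma fpair_eq {α : Type*} [DecidableEq α] {x y c d : α} :
    ({x, y} : Finset α) = {c, d} ↔ x = c ∧ y = d ∨ x = d ∧ y = c := by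
  rw [← Finset.coe_inj]
  simp only [Finset.coe_insert, Finset.coe_singleton]
  exact Set.pair_eq_pair_iff

private lemma crossing {V : Type*} [DecidableEq V] {X : Finset V} {x y z w : V}
    (hx : x ∈ X) (hw : w ∉ X) :
    ∃ u v : V, u ∈ X ∧ v ∉ X ∧ ((u = x ∧ v = y) ∨ (u = y ∧ v = z) ∨ (u = z ∧ v = w)) := by
  by_cases hy : y ∈ X
  · by_cases hz : z ∈ X
    · exact ⟨z, w, hz, hw, Or.inr (Or.inr ⟨rfl, rfl⟩)⟩
    · exact ⟨y, z, hy, hz, Or.inr (Or.inl ⟨rfl, rfl⟩)⟩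
  · exact ⟨x, y, hx, hy, Or.inl ⟨rfl, rfl⟩⟩

private lemma deg_aux {V : Type*} [Fintype V] [DecidableEq V]
    (s t : V) (A B : Finset V)
    (hsA : s ∉ A) (hsB : s ∉ B) (htA : t ∉ A)
    (hAB : Disjoint A B)
    (p : ℕ) (hp : 2 ≤ p) (hcardA : A.card = p)
    (a₁ a₂ : V) (ha₁ : a₁ ∈ A) (ha₂ : a₂ ∈ A) (ha : a₁ ≠ a₂)
    (b₁ b₂ : V) (hb₁ : b₁ ∈ B) (hb₂ : b₂ ∈ B)
    (G' : SimpleGraph V)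
    (hadj : ∀ u v, G'.Adj u v ↔
      ((((u = s ∧ v ∈ A) ∨ (v = s ∧ u ∈ A) ∨ (u = t ∧ v ∈ B) ∨ (v = t ∧ u ∈ B) ∨
          (u ∈ A ∧ v ∈ A ∧ u ≠ v) ∨ (u ∈ B ∧ v ∈ B ∧ u ≠ v)) ∧
          ({u, v} : Finset V) ≠ {a₁, a₂} ∧ ({u, v} : Finset V) ≠ {b₁, b₂}) ∨
        ({u, v} : Finset V) = {a₁, b₁} ∨ ({u, v} : Finset V) = {a₂, b₂})) :
    ∀ v ∈ A, G'.degree v = p := by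
  intro v hvA
  have hB1A : b₁ ∉ A := fun h => (Finset.disjoint_left.mp hAB h) hb₁
  have hB2A : b₂ ∉ A := fun h => (Finset.disjoint_left.mp hAB h) hb₂
  have hd : ∀ x, x ∈ A → x ∈ B → False :=
    fun x h1 h2 => (Finset.disjoint_left.mp hAB h1) h2
  have hsa₁ : s ≠ a₁ := fun h => hsA (h ▸ ha₁)
  have hsa₂ : s ≠ a₂ := fun h => hsA (h ▸ ha₂)
  have hsb₁ : s ≠ b₁ := fun h => hsB (h ▸ hb₁)
  have hsb₂ : s ≠ b₂ := fun h => hsB (h ▸ hb₂)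
  rw [← SimpleGraph.card_neighborFinset_eq_degree]
  by_cases hv1 : v = a₁
  · rw [hv1]
    have hN : G'.neighborFinset a₁ = insert s (insert b₁ ((A.erase a₂).erase a₁)) := by
      ext u
      rw [SimpleGraph.mem_neighborFinset, hadj]
      simp only [ne_eq, fpair_eq, Finset.mem_insert, Finset.mem_erase]
      constructor
      · rintro (⟨hbase, hc1, hc2⟩ | (⟨e1, e2⟩ | ⟨e1, e2⟩) | (⟨e1, e2⟩ | ⟨e1, e2⟩))
        · rcases hbase with ⟨e1, e2⟩ | ⟨e1, e2⟩ | ⟨e1, e2⟩ | ⟨e1, e2⟩ |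
            ⟨e1, e2, e3⟩ | ⟨e1, e2, e3⟩
          · exact absurd (e1 ▸ ha₁) hsA
          · exact Or.inl e1
          · exact absurd (e1 ▸ ha₁) htA
          · exact absurd e2 (fun h => hd a₁ ha₁ h)
          · exact Or.inr (Or.inr ⟨fun h => e3 h.symm,
              fun h => hc1 (Or.inl ⟨trivial, h⟩), e2⟩)
          · exact absurd e1 (fun h => hd a₁ ha₁ h)
        · exact Or.inr (Or.inl e2)
        · exact absurd (e1 ▸ ha₁) hB1A
        · exact absurd e1 ha
        · exact absurd (e1 ▸ ha₁) hB2A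
      · rintro (rfl | rfl | ⟨hne1, hne2, huA⟩)
        · refine Or.inl ⟨Or.inr (Or.inl ⟨rfl, ha₁⟩), ?_, ?_⟩
          · rintro (⟨-, h⟩ | ⟨h, -⟩)
            · exact hsa₂ h
            · exact ha h
          · rintro (⟨h, -⟩ | ⟨h, -⟩)
            · exact hB1A (h ▸ ha₁)
            · exact hB2A (h ▸ ha₁)
        · exact Or.inr (Or.inl (Or.inl ⟨trivial, rfl⟩))
        · refine Or.inl ⟨Or.inr (Or.inr (Or.inr (Or.inr (Or.inl
            ⟨ha₁, huA, fun h => hne1 h.symm⟩)))), ?_, ?_⟩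
          · rintro (⟨-, h⟩ | ⟨h, -⟩)
            · exact hne2 h
            · exact ha h
          · rintro (⟨h, -⟩ | ⟨h, -⟩)
            · exact hB1A (h ▸ ha₁)
            · exact hB2A (h ▸ ha₁)
    have hb₁nm : b₁ ∉ (A.erase a₂).erase a₁ :=
      fun h => hB1A (Finset.mem_of_mem_erase (Finset.mem_of_mem_erase h))
    have hsnm : s ∉ insert b₁ ((A.erase a₂).erase a₁) := by
      simp only [Finset.mem_insert]
      rintro (h | h)
      · exact hsb₁ h
      · exact hsA (Finset.mem_of_mem_erase (Finset.mem_of_mem_erase h))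
    rw [hN, Finset.card_insert_of_notMem hsnm, Finset.card_insert_of_notMem hb₁nm,
      Finset.card_erase_of_mem (Finset.mem_erase.mpr ⟨ha, ha₁⟩),
      Finset.card_erase_of_mem ha₂, hcardA]
    omega
  · by_cases hv2 : v = a₂
    · rw [hv2]
      have hN : G'.neighborFinset a₂ = insert s (insert b₂ ((A.erase a₁).erase a₂)) := by
        ext u
        rw [SimpleGraph.mem_neighborFinset, hadj]
        simp only [ne_eq, fpair_eq, Finset.mem_insert, Finset.mem_erase]
        constructor
        · rintro (⟨hbase, hc1, hc2⟩ | (⟨e1, e2⟩ | ⟨e1, e2⟩) | (⟨e1, e2⟩ | ⟨e1, e2⟩))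
          · rcases hbase with ⟨e1, e2⟩ | ⟨e1, e2⟩ | ⟨e1, e2⟩ | ⟨e1, e2⟩ |
              ⟨e1, e2, e3⟩ | ⟨e1, e2, e3⟩
            · exact absurd (e1 ▸ ha₂) hsA
            · exact Or.inl e1
            · exact absurd (e1 ▸ ha₂) htA
            · exact absurd e2 (fun h => hd a₂ ha₂ h)
            · exact Or.inr (Or.inr ⟨fun h => e3 h.symm,
                fun h => hc1 (Or.inr ⟨trivial, h⟩), e2⟩)
            · exact absurd e1 (fun h => hd a₂ ha₂ h)
          · exact absurd e1 (fun h => ha h.symm)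
          · exact absurd (e1 ▸ ha₂) hB1A
          · exact Or.inr (Or.inl e2)
          · exact absurd (e1 ▸ ha₂) hB2A
        · rintro (rfl | rfl | ⟨hne1, hne2, huA⟩)
          · refine Or.inl ⟨Or.inr (Or.inl ⟨rfl, ha₂⟩), ?_, ?_⟩
            · rintro (⟨h, -⟩ | ⟨-, h⟩)
              · exact ha h.symm
              · exact hsa₁ h
            · rintro (⟨h, -⟩ | ⟨h, -⟩)
              · exact hB1A (h ▸ ha₂)
              · exact hB2A (h ▸ ha₂)
          · exact Or.inr (Or.inr (Or.inl ⟨trivial, rfl⟩))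
          · refine Or.inl ⟨Or.inr (Or.inr (Or.inr (Or.inr (Or.inl
              ⟨ha₂, huA, fun h => hne1 h.symm⟩)))), ?_, ?_⟩
            · rintro (⟨h, -⟩ | ⟨-, h⟩)
              · exact ha h.symm
              · exact hne2 h
            · rintro (⟨h, -⟩ | ⟨h, -⟩)
              · exact hB1A (h ▸ ha₂)
              · exact hB2A (h ▸ ha₂)
      have hb₂nm : b₂ ∉ (A.erase a₁).erase a₂ :=
        fun h => hB2A (Finset.mem_of_mem_erase (Finset.mem_of_mem_erase h))
      have hsnm : s ∉ insert b₂ ((A.erase a₁).erase a₂) := by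
        simp only [Finset.mem_insert]
        rintro (h | h)
        · exact hsb₂ h
        · exact hsA (Finset.mem_of_mem_erase (Finset.mem_of_mem_erase h))
      rw [hN, Finset.card_insert_of_notMem hsnm, Finset.card_insert_of_notMem hb₂nm,
        Finset.card_erase_of_mem (Finset.mem_erase.mpr ⟨fun h => ha h.symm, ha₂⟩),
        Finset.card_erase_of_mem ha₁, hcardA]
      omega
    · -- generic vertex of A
      have hN : G'.neighborFinset v = insert s (A.erase v) := by
        ext u
        rw [SimpleGraph.mem_neighborFinset, hadj]
        simp only [ne_eq, fpair_eq, Finset.mem_insert, Finset.mem_erase]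
        constructor
        · rintro (⟨hbase, hc1, hc2⟩ | (⟨e1, e2⟩ | ⟨e1, e2⟩) | (⟨e1, e2⟩ | ⟨e1, e2⟩))
          · rcases hbase with ⟨e1, e2⟩ | ⟨e1, e2⟩ | ⟨e1, e2⟩ | ⟨e1, e2⟩ |
              ⟨e1, e2, e3⟩ | ⟨e1, e2, e3⟩
            · exact absurd (e1 ▸ hvA) hsA
            · exact Or.inl e1
            · exact absurd (e1 ▸ hvA) htA
            · exact absurd e2 (fun h => hd v hvA h)
            · exact Or.inr ⟨fun h => e3 h.symm, e2⟩
            · exact absurd e1 (fun h => hd v hvA h)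
          · exact absurd e1 hv1
          · exact absurd (e1 ▸ hvA) hB1A
          · exact absurd e1 hv2
          · exact absurd (e1 ▸ hvA) hB2A
        · rintro (rfl | ⟨hne, huA⟩)
          · refine Or.inl ⟨Or.inr (Or.inl ⟨rfl, hvA⟩), ?_, ?_⟩
            · rintro (⟨h, -⟩ | ⟨h, -⟩)
              · exact hv1 h
              · exact hv2 h
            · rintro (⟨h, -⟩ | ⟨h, -⟩)
              · exact hB1A (h ▸ hvA)
              · exact hB2A (h ▸ hvA)
          · refine Or.inl ⟨Or.inr (Or.inr (Or.inr (Or.inr (Or.inl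
              ⟨hvA, huA, fun h => hne h.symm⟩)))), ?_, ?_⟩
            · rintro (⟨h, -⟩ | ⟨h, -⟩)
              · exact hv1 h
              · exact hv2 h
            · rintro (⟨h, -⟩ | ⟨h, -⟩)
              · exact hB1A (h ▸ hvA)
              · exact hB2A (h ▸ hvA)
      have hsnm : s ∉ A.erase v := fun h => hsA (Finset.mem_of_mem_erase h)
      rw [hN, Finset.card_insert_of_notMem hsnm, Finset.card_erase_of_mem hvA, hcardA]
      omega

set_option maxHeartbeats 1600000 in
theorem stmt12 {V : Type*} [Fintype V] [DecidableEq V]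
    (s t : V) (A B : Finset V) (hst : s ≠ t)
    (hsA : s ∉ A) (hsB : s ∉ B) (htA : t ∉ A) (htB : t ∉ B)
    (hAB : Disjoint A B)
    (hcover : insert s (insert t (A ∪ B)) = (Finset.univ : Finset V))
    (p : ℕ) (hp : 2 ≤ p) (hcardA : A.card = p) (hcardB : B.card = p)
    (a₁ a₂ : V) (ha₁ : a₁ ∈ A) (ha₂ : a₂ ∈ A) (ha : a₁ ≠ a₂)
    (b₁ b₂ : V) (hb₁ : b₁ ∈ B) (hb₂ : b₂ ∈ B) (hb : b₁ ≠ b₂)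
    (G' : SimpleGraph V)
    -- G' is obtained from the base graph by removing edges {a₁,a₂} and {b₁,b₂}
    -- and adding edges {a₁,b₁} and {a₂,b₂}
    (hadj : ∀ u v, G'.Adj u v ↔
      ((((u = s ∧ v ∈ A) ∨ (v = s ∧ u ∈ A) ∨ (u = t ∧ v ∈ B) ∨ (v = t ∧ u ∈ B) ∨
          (u ∈ A ∧ v ∈ A ∧ u ≠ v) ∨ (u ∈ B ∧ v ∈ B ∧ u ≠ v)) ∧
          ({u, v} : Finset V) ≠ {a₁, a₂} ∧ ({u, v} : Finset V) ≠ {b₁, b₂}) ∨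
        ({u, v} : Finset V) = {a₁, b₁} ∨ ({u, v} : Finset V) = {a₂, b₂})) :
    G'.Reachable s t ∧
      (∀ v : V, v ∈ A ∪ B → G'.degree v = p) ∧
      (∀ X : Finset V, s ∈ X → t ∉ X →
        2 ≤ ∑ u ∈ X, ∑ v ∈ Xᶜ, (if G'.Adj u v then (1 : ℕ) else 0)) ∧
      (∃ X : Finset V, s ∈ X ∧ t ∉ X ∧
        ∑ u ∈ X, ∑ v ∈ Xᶜ, (if G'.Adj u v then (1 : ℕ) else 0) = 2) := by
  classical
  have hA1B : a₁ ∉ B := fun h => (Finset.disjoint_left.mp hAB ha₁) h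
  have hA2B : a₂ ∉ B := fun h => (Finset.disjoint_left.mp hAB ha₂) h
  have hB1A : b₁ ∉ A := fun h => (Finset.disjoint_left.mp hAB h) hb₁
  have hB2A : b₂ ∉ A := fun h => (Finset.disjoint_left.mp hAB h) hb₂
  have hd : ∀ x, x ∈ A → x ∈ B → False :=
    fun x h1 h2 => (Finset.disjoint_left.mp hAB h1) h2
  have hsa₁ : s ≠ a₁ := fun h => hsA (h ▸ ha₁)
  have hsa₂ : s ≠ a₂ := fun h => hsA (h ▸ ha₂)
  have hsb₁ : s ≠ b₁ := fun h => hsB (h ▸ hb₁)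
  have hsb₂ : s ≠ b₂ := fun h => hsB (h ▸ hb₂)
  have hta₁ : t ≠ a₁ := fun h => htA (h ▸ ha₁)
  have hta₂ : t ≠ a₂ := fun h => htA (h ▸ ha₂)
  have htb₁ : t ≠ b₁ := fun h => htB (h ▸ hb₁)
  have htb₂ : t ≠ b₂ := fun h => htB (h ▸ hb₂)
  have ha₁b₂ : a₁ ≠ b₂ := fun h => hA1B (h ▸ hb₂)
  have ha₂b₁ : a₂ ≠ b₁ := fun h => hA2B (h ▸ hb₁)
  -- adjacency facts
  have adj_sa : ∀ a ∈ A, G'.Adj s a := by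
    intro a haA
    rw [hadj]
    refine Or.inl ⟨Or.inl ⟨rfl, haA⟩, ?_, ?_⟩
    · rw [Ne, fpair_eq]
      rintro (⟨h1, -⟩ | ⟨h1, -⟩)
      · exact hsa₁ h1
      · exact hsa₂ h1
    · rw [Ne, fpair_eq]
      rintro (⟨h1, -⟩ | ⟨h1, -⟩)
      · exact hsb₁ h1
      · exact hsb₂ h1
  have adj_bt : ∀ b ∈ B, G'.Adj b t := by
    intro b hbB
    rw [hadj]
    refine Or.inl ⟨Or.inr (Or.inr (Or.inr (Or.inl ⟨rfl, hbB⟩))), ?_, ?_⟩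
    · rw [Ne, fpair_eq]
      rintro (⟨-, h2⟩ | ⟨-, h2⟩)
      · exact hta₂ h2
      · exact hta₁ h2
    · rw [Ne, fpair_eq]
      rintro (⟨-, h2⟩ | ⟨-, h2⟩)
      · exact htb₂ h2
      · exact htb₁ h2
  have adj_a1b1 : G'.Adj a₁ b₁ := by rw [hadj]; exact Or.inr (Or.inl rfl)
  have adj_a2b2 : G'.Adj a₂ b₂ := by rw [hadj]; exact Or.inr (Or.inr rfl)
  -- sum to card
  have key : ∀ X : Finset V,
      ∑ u ∈ X, ∑ v ∈ Xᶜ, (if G'.Adj u v then (1 : ℕ) else 0) =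
        ((X ×ˢ Xᶜ).filter fun q => G'.Adj q.1 q.2).card := by
    intro X
    rw [← Finset.sum_product', Finset.sum_boole]
    norm_num
  refine ⟨?_, ?_, ?_, ?_⟩
  · exact ((adj_sa a₁ ha₁).reachable.trans adj_a1b1.reachable).trans
      (adj_bt b₁ hb₁).reachable
  · -- degrees
    intro v hv
    rw [Finset.mem_union] at hv
    rcases hv with hvA | hvB
    · exact deg_aux s t A B hsA hsB htA hAB p hp hcardA a₁ a₂ ha₁ ha₂ ha b₁ b₂ hb₁ hb₂
        G' hadj v hvA
    · have hadj' : ∀ u v, G'.Adj u v ↔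
        ((((u = t ∧ v ∈ B) ∨ (v = t ∧ u ∈ B) ∨ (u = s ∧ v ∈ A) ∨ (v = s ∧ u ∈ A) ∨
            (u ∈ B ∧ v ∈ B ∧ u ≠ v) ∨ (u ∈ A ∧ v ∈ A ∧ u ≠ v)) ∧
            ({u, v} : Finset V) ≠ {b₁, b₂} ∧ ({u, v} : Finset V) ≠ {a₁, a₂}) ∨
          ({u, v} : Finset V) = {b₁, a₁} ∨ ({u, v} : Finset V) = {b₂, a₂}) := by
        intro u w
        rw [hadj, Finset.pair_comm b₁ a₁, Finset.pair_comm b₂ a₂]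
        tauto
      exact deg_aux t s B A htB htA hsB hAB.symm p hp hcardB b₁ b₂ hb₁ hb₂ hb a₁ a₂
        ha₁ ha₂ G' hadj' v hvB
  · -- lower bound
    intro X hsX htX
    rw [key]
    obtain ⟨u, v, hu, hv, hcase⟩ := crossing (y := a₁) (z := b₁) hsX htX
    obtain ⟨u', v', hu', hv', hcase'⟩ := crossing (y := a₂) (z := b₂) hsX htX
    have hadj1 : G'.Adj u v := by
      rcases hcase with ⟨h1, h2⟩ | ⟨h1, h2⟩ | ⟨h1, h2⟩ <;> rw [h1, h2]
      · exact adj_sa a₁ ha₁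
      · exact adj_a1b1
      · exact adj_bt b₁ hb₁
    have hadj2 : G'.Adj u' v' := by
      rcases hcase' with ⟨h1, h2⟩ | ⟨h1, h2⟩ | ⟨h1, h2⟩ <;> rw [h1, h2]
      · exact adj_sa a₂ ha₂
      · exact adj_a2b2
      · exact adj_bt b₂ hb₂
    have hm1 : (u, v) ∈ (X ×ˢ Xᶜ).filter fun q => G'.Adj q.1 q.2 :=
      Finset.mem_filter.mpr ⟨Finset.mem_product.mpr ⟨hu, Finset.mem_compl.mpr hv⟩, hadj1⟩
    have hm2 : (u', v') ∈ (X ×ˢ Xᶜ).filter fun q => G'.Adj q.1 q.2 :=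
      Finset.mem_filter.mpr ⟨Finset.mem_product.mpr ⟨hu', Finset.mem_compl.mpr hv'⟩, hadj2⟩
    have hne : (u, v) ≠ (u', v') := by
      intro he
      have e1 : u = u' := congrArg Prod.fst he
      have e2 : v = v' := congrArg Prod.snd he
      rcases hcase with ⟨h1, h2⟩ | ⟨h1, h2⟩ | ⟨h1, h2⟩ <;>
        rcases hcase' with ⟨h1', h2'⟩ | ⟨h1', h2'⟩ | ⟨h1', h2'⟩
      · exact ha (h2.symm.trans (e2.trans h2'))
      · exact hsa₂ (h1.symm.trans (e1.trans h1'))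
      · exact hsb₂ (h1.symm.trans (e1.trans h1'))
      · exact hsa₁ (h1'.symm.trans (e1.symm.trans h1))
      · exact ha (h1.symm.trans (e1.trans h1'))
      · exact ha₁b₂ (h1.symm.trans (e1.trans h1'))
      · exact hsb₁ (h1'.symm.trans (e1.symm.trans h1))
      · exact ha₂b₁ (h1'.symm.trans (e1.symm.trans h1))
      · exact hb (h1.symm.trans (e1.trans h1'))
    exact Finset.one_lt_card.mpr ⟨(u, v), hm1, (u', v'), hm2, hne⟩
  · -- upper bound
    refine ⟨insert s A, Finset.mem_insert_self _ _, ?_, ?_⟩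
    · simp only [Finset.mem_insert]
      rintro (h | h)
      · exact hst h.symm
      · exact htA h
    · have hcompl : (insert s A)ᶜ = insert t B := by
        ext v
        have hv : v ∈ insert s (insert t (A ∪ B)) := by
          rw [hcover]; exact Finset.mem_univ v
        simp only [Finset.mem_insert, Finset.mem_union] at hv
        simp only [Finset.mem_compl, Finset.mem_insert]
        constructor
        · intro h
          push_neg at h
          rcases hv with rfl | rfl | h' | h'
          · exact absurd rfl h.1
          · exact Or.inl rfl
          · exact absurd h' h.2
          · exact Or.inr h'
        · rintro (rfl | h') <;> push_neg
          · exact ⟨hst.symm, htA⟩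
          · exact ⟨fun hh => hsB (hh ▸ h'), fun hh => hd v hh h'⟩
      rw [key, hcompl]
      have hfilt : ((insert s A ×ˢ insert t B).filter fun q => G'.Adj q.1 q.2) =
          {(a₁, b₁), (a₂, b₂)} := by
        ext ⟨u, v⟩
        simp only [Finset.mem_filter, Finset.mem_product, Finset.mem_insert,
          Finset.mem_singleton, Prod.mk.injEq]
        constructor
        · rintro ⟨⟨hu, hv⟩, hA'⟩
          rw [hadj] at hA'
          rcases hA' with ⟨hbase, hp1, hp2⟩ | hnew | hnew
          · exfalso
            rcases hu with rfl | hu <;> rcases hv with rfl | hv <;>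
              rcases hbase with ⟨e1, e2⟩ | ⟨e1, e2⟩ | ⟨e1, e2⟩ | ⟨e1, e2⟩ |
                ⟨e1, e2, e3⟩ | ⟨e1, e2, e3⟩ <;>
              first
              | exact hst e1
              | exact hst e1.symm
              | exact hst e2
              | exact hst e2.symm
              | exact hsA e1
              | exact hsA e2
              | exact hsB e1
              | exact hsB e2
              | exact htA e1
              | exact htA e2
              | exact htB e1
              | exact htB e2
              | exact hd _ e2 hv
              | exact hd _ hu e2
              | exact hd _ hu e1
              | exact hsA (e1 ▸ hu)
              | exact hsB (e1 ▸ hv)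
              | exact htA (e1 ▸ hu)
          · rw [fpair_eq] at hnew
            rcases hnew with ⟨rfl, rfl⟩ | ⟨rfl, rfl⟩
            · exact Or.inl ⟨rfl, rfl⟩
            · exfalso
              rcases hu with rfl | hu
              · exact hsb₁ rfl
              · exact hB1A hu
          · rw [fpair_eq] at hnew
            rcases hnew with ⟨rfl, rfl⟩ | ⟨rfl, rfl⟩
            · exact Or.inr ⟨rfl, rfl⟩
            · exfalso
              rcases hu with rfl | hu
              · exact hsb₂ rfl
              · exact hB2A hu
        · rintro (⟨rfl, rfl⟩ | ⟨rfl, rfl⟩)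
          · exact ⟨⟨Or.inr ha₁, Or.inr hb₁⟩, adj_a1b1⟩
          · exact ⟨⟨Or.inr ha₂, Or.inr hb₂⟩, adj_a2b2⟩
      rw [hfilt]
      rw [Finset.card_insert_of_notMem (by simp [Prod.ext_iff, ha]),
        Finset.card_singleton]
end

section
/- Let G = (V, w_G) be a weighted graph with n vertices and maximum edge weight W ≥ 1, let 0 < ε < 1/3, and let H be an ε-cut sparsifier of G with integral weights whose maximum edge weight is at most c·ε²·n·W. Let F be a maximum s-t flow in H, H' the graph with weights w_H − F, and P = {A_1,...,A_t} a 3εn-strong partition of H' (each H'[A_i] is 3εn-connected and the total weight in H' of edges between different parts is O(εn²)). Then Σ_{i=1}^t w_G(Δ_G(A_i)) = O(ε·n²·W). -/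
open Finset

section defs

variable {V : Type*} [Fintype V] [DecidableEq V]

/-- The induced subgraph on `S` is `k`-connected. -/
def KConn (w : V → V → ℝ) (k : ℝ) (S : Finset V) : Prop :=
  ∀ B : Finset V, B ⊆ S → B.Nonempty → B ≠ S →
    k ≤ ∑ i ∈ B, ∑ j ∈ S \ B, w i j

end defs

lemma exists_chain' {V : Type*} {r : V → V → Prop} {a b : V} (h : Relation.TransGen r a b) :
    ∃ (m : ℕ) (g : ℕ → V), 0 < m ∧ g 0 = a ∧ g m = b ∧ ∀ i, i < m → r (g i) (g (i + 1)) := by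
  induction h with
  | single hr =>
      rename_i b'
      exact ⟨1, fun i => if i = 0 then a else b', one_pos, by simp, by simp, by
        intro i hi
        interval_cases i
        simpa using hr⟩
  | tail h' hr ih =>
      rename_i b' c'
      obtain ⟨m, g, hm, h0, hb, he⟩ := ih
      refine ⟨m + 1, fun i => if i ≤ m then g i else c', by omega, by simp [h0], by simp, ?_⟩
      intro i hi
      by_cases hcase : i < m
      · have h1 : i ≤ m := by omega
        have h2 : i + 1 ≤ m := by omega
        simpa [h1, h2] using he i hcase
      · have h1 : i = m := by omega
        subst h1
        simpa [hb] using hr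

lemma exists_pos_fn {V : Type} [Fintype V] [DecidableEq V] (f : V → V → ℝ)
    (hnc : ∀ (m : ℕ) (cyc : Fin (m + 1) → V),
      ¬ ((∀ i : Fin m, 0 < f (cyc i.castSucc) (cyc i.succ)) ∧
          0 < f (cyc (Fin.last m)) (cyc 0))) :
    ∃ pos : V → ℕ, (∀ v, pos v ≤ Fintype.card V) ∧
      (∀ u v, pos u = pos v → u = v) ∧ (∀ u v, 0 < f u v → pos u < pos v) := by
  classical
  set r : V → V → Prop := fun u v => 0 < f u v with hr
  have hacyc : ∀ v, ¬ Relation.TransGen r v v := by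
    intro v hv
    obtain ⟨m, g, hm, h0, hb, he⟩ := exists_chain' hv
    obtain ⟨m', rfl⟩ : ∃ m', m = m' + 1 := ⟨m - 1, by omega⟩
    refine hnc m' (fun j => g j.val) ⟨?_, ?_⟩
    · intro i
      have := he i.val (by omega)
      simpa using this
    · have := he m' (by omega)
      have hg0 : g (m' + 1) = g 0 := by rw [h0, hb]
      simpa [Fin.val_last, hg0] using this
  set le' : V → V → Prop := fun a b => a = b ∨ Relation.TransGen r a b with hle'
  have htrans' : ∀ a b c, le' a b → le' b c → le' a c := by
    intro a b c hab hbc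
    rcases hab with rfl | hab
    · exact hbc
    rcases hbc with rfl | hbc
    · exact Or.inr hab
    · exact Or.inr (hab.trans hbc)
  haveI hpo : IsPartialOrder V le' :=
    { refl := fun a => Or.inl rfl
      trans := htrans'
      antisymm := by
        intro a b hab hba
        rcases hab with rfl | hab
        · rfl
        rcases hba with rfl | hba
        · rfl
        exact absurd (hab.trans hba) (hacyc _) }
  obtain ⟨lin, hlin, hext⟩ := extend_partialOrder le'
  haveI := hlin
  have hlt : ∀ u v : V, lin u v → u ≠ v →
      (univ.filter (fun x => lin x u ∧ x ≠ u)).card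
        < (univ.filter (fun x => lin x v ∧ x ≠ v)).card := by
    intro u v huv hne
    apply Finset.card_lt_card
    rw [Finset.ssubset_iff_of_subset]
    · exact ⟨u, by simp [huv, hne], by simp⟩
    · intro x hx
      simp only [Finset.mem_filter, Finset.mem_univ, true_and] at hx ⊢
      refine ⟨IsTrans.trans _ _ _ hx.1 huv, ?_⟩
      rintro rfl
      exact hne (Std.Antisymm.antisymm _ _ huv hx.1)
  refine ⟨fun v => (univ.filter (fun x => lin x v ∧ x ≠ v)).card, ?_, ?_, ?_⟩
  · intro v
    exact le_trans (Finset.card_filter_le _ _) (by simp)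
  · intro u v hpos
    by_contra hne
    rcases Std.Total.total (r := lin) u v with h | h
    · exact absurd hpos (Nat.ne_of_lt (hlt u v h hne))
    · exact absurd hpos.symm (Nat.ne_of_lt (hlt v u h (Ne.symm hne)))
  · intro u v huv
    have hne : u ≠ v := by
      rintro rfl
      exact hacyc u (Relation.TransGen.single huv)
    exact hlt u v (hext _ _ (Or.inr (Relation.TransGen.single huv))) hne

theorem stmt14 (c c' : ℝ) (hc : 0 < c) (hc' : 0 < c') :
    ∃ C : ℝ, 0 < C ∧
      ∀ (V : Type) (_ : Fintype V) (_ : DecidableEq V)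
        (wG wH : V → V → ℝ) (ε W : ℝ) (s t : V) (f : V → V → ℝ)
        (P : Finset (Finset V)),
        s ≠ t →
        -- G has symmetric nonnegative weights bounded by W ≥ 1
        (∀ u v, wG u v = wG v u) → (∀ u v, 0 ≤ wG u v) →
        (∀ u v, wG u v ≤ W) → 1 ≤ W →
        0 < ε → ε < 1/3 →
        -- H is an ε-cut sparsifier of G with integral weights bounded by c·ε²·n·W
        (∀ u v, wH u v = wH v u) → (∀ u v, ∃ m : ℕ, wH u v = (m : ℝ)) →
        (∀ u v, 0 < wH u v → 0 < wG u v) →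
        (∀ X : Finset V, (1 - ε) * cutWeight wG X ≤ cutWeight wH X ∧
          cutWeight wH X ≤ (1 + ε) * cutWeight wG X) →
        (∀ u v, wH u v ≤ c * ε ^ 2 * (Fintype.card V : ℝ) * W) →
        -- f is a non-circular maximum s-t flow in H (skew-symmetric form)
        (∀ u v, f u v = - f v u) →
        (∀ u v, |f u v| ≤ wH u v) →
        (∀ u, u ≠ s → u ≠ t → ∑ v, f u v = 0) →
        (∑ v, f s v = minCut wH s t) →
        (∀ (m : ℕ) (cyc : Fin (m + 1) → V),
          ¬ ((∀ i : Fin m, 0 < f (cyc i.castSucc) (cyc i.succ)) ∧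
              0 < f (cyc (Fin.last m)) (cyc 0))) →
        -- P is a 3εn-strong partition of H' = H − F
        (∀ A ∈ P, ∀ B ∈ P, A ≠ B → Disjoint A B) →
        (P.biUnion id = Finset.univ) →
        (∀ A ∈ P, KConn (fun u v => wH u v - |f u v|)
          (3 * ε * (Fintype.card V : ℝ)) A) →
        (∑ A ∈ P, cutWeight (fun u v => wH u v - |f u v|) A ≤
          c' * ε * (Fintype.card V : ℝ) ^ 2) →
        -- conclusion: total G-weight of the cuts of the parts is O(ε·n²·W)
        ∑ A ∈ P, cutWeight wG A ≤ C * ε * (Fintype.card V : ℝ) ^ 2 * W := by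
  classical
  refine ⟨2 * (c' + 4 * c + 4), by positivity, ?_⟩
  intro V iV dV wG wH ε W s t f P hst hGsymm hG0 hGW hW1 hε0 hε13 hHsymm hHint hHpos
    hsparse hHcap hfskew hfcap hfcons hfval hnc hPdisj hPcover hPconn hPcut
  set n : ℕ := Fintype.card V with hn
  set lam : ℝ := minCut wH s t with hlam
  obtain ⟨pos, hposN, hposinj, hposf⟩ := exists_pos_fn f hnc
  have hεW : 0 < W := lt_of_lt_of_le one_pos hW1
  have hH0 : ∀ u v, 0 ≤ wH u v := by
    intro u v
    obtain ⟨m, hm⟩ := hHint u v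
    rw [hm]
    positivity
  have hWH0 : (0:ℝ) ≤ c * ε ^ 2 * (n : ℝ) * W := by positivity
  have hcutH0 : ∀ X : Finset V, 0 ≤ cutWeight wH X := by
    intro X
    exact Finset.sum_nonneg fun u _ => Finset.sum_nonneg fun v _ => hH0 u v
  have hcutG0 : ∀ X : Finset V, 0 ≤ cutWeight wG X := by
    intro X
    exact Finset.sum_nonneg fun u _ => Finset.sum_nonneg fun v _ => hG0 u v
  -- lam is nonnegative
  have hlam0 : 0 ≤ lam := by
    rw [hlam, minCut]
    apply Real.sInf_nonneg
    rintro x ⟨X, -, -, rfl⟩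
    exact hcutH0 X
  -- lam is at most 2 n W
  have hlam2 : lam ≤ 2 * (n : ℝ) * W := by
    have hmem : cutWeight wH {s} ∈ {r : ℝ | ∃ X : Finset V, s ∈ X ∧ t ∉ X ∧ cutWeight wH X = r} := by
      refine ⟨{s}, Finset.mem_singleton_self s, ?_, rfl⟩
      simp only [Finset.mem_singleton]
      exact fun h => hst h.symm
    have hbdd : BddBelow {r : ℝ | ∃ X : Finset V, s ∈ X ∧ t ∉ X ∧ cutWeight wH X = r} := by
      refine ⟨0, ?_⟩
      rintro x ⟨X, -, -, rfl⟩
      exact hcutH0 X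
    have h1 : lam ≤ cutWeight wH {s} := csInf_le hbdd hmem
    have h2 : cutWeight wH {s} ≤ (1 + ε) * cutWeight wG {s} := (hsparse {s}).2
    have h3 : cutWeight wG {s} ≤ (n : ℝ) * W := by
      rw [cutWeight, Finset.sum_singleton]
      calc ∑ v ∈ ({s} : Finset V)ᶜ, wG s v ≤ ∑ v ∈ ({s} : Finset V)ᶜ, W :=
            Finset.sum_le_sum fun v _ => hGW s v
        _ = (({s} : Finset V)ᶜ.card : ℝ) * W := by rw [Finset.sum_const, nsmul_eq_mul]
        _ ≤ (n : ℝ) * W := by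
            apply mul_le_mul_of_nonneg_right _ (le_of_lt hεW)
            exact_mod_cast Nat.cast_le.mpr (le_trans (Finset.card_le_univ _) (le_refl _))
    have h4 : 0 ≤ cutWeight wG {s} := hcutG0 {s}
    nlinarith
  -- net flow out of each vertex
  have hskewX : ∀ X : Finset V, ∑ u ∈ X, ∑ v ∈ X, f u v = 0 := by
    intro X
    have h1 : ∑ u ∈ X, ∑ v ∈ X, f u v = ∑ u ∈ X, ∑ v ∈ X, -(f v u) := by
      refine Finset.sum_congr rfl fun u _ => Finset.sum_congr rfl fun v _ => ?_
      rw [hfskew u v]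
    have h2 : ∑ u ∈ X, ∑ v ∈ X, -(f v u) = -∑ u ∈ X, ∑ v ∈ X, f v u := by
      simp [Finset.sum_neg_distrib]
    have h3 : ∑ u ∈ X, ∑ v ∈ X, f v u = ∑ u ∈ X, ∑ v ∈ X, f u v := Finset.sum_comm
    linarith [h1, h2.symm ▸ h1, h3]
  have hnet : ∀ u, ∑ v, f u v = if u = s then lam else if u = t then -lam else 0 := by
    have hts : ∑ v, f t v = -lam := by
      have htot : ∑ u, ∑ v, f u v = 0 := hskewX univ
      have hsub : ∑ u ∈ ({s, t} : Finset V), ∑ v, f u v = ∑ u, ∑ v, f u v := by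
        apply Finset.sum_subset (Finset.subset_univ _)
        intro x _ hx
        simp only [Finset.mem_insert, Finset.mem_singleton, not_or] at hx
        exact hfcons x hx.1 hx.2
      rw [Finset.sum_pair hst] at hsub
      rw [hfval] at hsub
      linarith [hsub, htot]
    intro u
    by_cases h1 : u = s
    · subst h1
      rw [if_pos rfl]
      exact hfval
    · by_cases h2 : u = t
      · subst h2
        rw [if_neg h1, if_pos rfl]
        exact hts
      · rw [if_neg h1, if_neg h2]
        exact hfcons u h1 h2
  -- level cuts carry at most lam
  have hcut_le : ∀ i : ℕ,
      ∑ u, ∑ v, (if pos u ≤ i ∧ i < pos v then f u v else 0) ≤ lam := by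
    intro i
    set X : Finset V := univ.filter (fun v => pos v ≤ i) with hX
    have hXc : Xᶜ = univ.filter (fun v => i < pos v) := by
      ext v
      simp [hX, Finset.mem_compl, Finset.mem_filter]
    have e0 : ∑ u, ∑ v, (if pos u ≤ i ∧ i < pos v then f u v else 0)
        = ∑ u ∈ X, ∑ v ∈ Xᶜ, f u v := by
      rw [hX, hXc, Finset.sum_filter]
      refine Finset.sum_congr rfl fun u _ => ?_
      by_cases hu : pos u ≤ i
      · rw [if_pos hu, Finset.sum_filter]
        refine Finset.sum_congr rfl fun v _ => ?_
        by_cases hv : i < pos v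
        · rw [if_pos hv, if_pos ⟨hu, hv⟩]
        · rw [if_neg hv, if_neg (fun h => hv h.2)]
      · rw [if_neg hu]
        apply Finset.sum_eq_zero
        intro v _
        rw [if_neg (fun h => hu h.1)]
    have e1 : ∑ u ∈ X, ∑ v ∈ Xᶜ, f u v = ∑ u ∈ X, ∑ v, f u v := by
      have hcompl : ∀ u : V, ∑ v ∈ Xᶜ, f u v = (∑ v, f u v) - ∑ v ∈ X, f u v := by
        intro u
        have hh := Finset.sum_add_sum_compl X (f u)
        linarith
      rw [Finset.sum_congr rfl fun u _ => hcompl u, Finset.sum_sub_distrib, hskewX X, sub_zero]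
    rw [e0, e1]
    calc ∑ u ∈ X, ∑ v, f u v
        = ∑ u ∈ X, (if u = s then lam else if u = t then -lam else 0) :=
          Finset.sum_congr rfl fun u _ => hnet u
      _ ≤ ∑ u ∈ X, (if u = s then lam else 0) := by
          apply Finset.sum_le_sum
          intro u _
          by_cases h1 : u = s
          · rw [if_pos h1, if_pos h1]
          · rw [if_neg h1, if_neg h1]
            by_cases h2 : u = t
            · rw [if_pos h2]; linarith
            · rw [if_neg h2]
      _ = if s ∈ X then lam else 0 := Finset.sum_ite_eq' X s fun _ => lam
      _ ≤ lam := by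
          split_ifs
          · exact le_rfl
          · exact hlam0
  -- forward edges have nonnegative flow
  have hfwd : ∀ u v, pos u < pos v → 0 ≤ f u v := by
    intro u v h
    by_contra hneg
    push_neg at hneg
    have h2 : 0 < f v u := by rw [hfskew v u]; linarith
    exact absurd (hposf v u h2) (by omega)
  -- the weighted sum bound
  have key : ∀ u v : V, ∑ i ∈ Finset.range n, (if pos u ≤ i ∧ i < pos v then f u v else 0)
      = (max (f u v) 0) * ((pos v - pos u : ℕ) : ℝ) := by
    intro u v
    rw [Finset.sum_ite, Finset.sum_const, Finset.sum_const_zero, add_zero]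
    have hfil : (Finset.range n).filter (fun i => pos u ≤ i ∧ i < pos v)
        = Finset.Ico (pos u) (pos v) := by
      ext j
      simp only [Finset.mem_filter, Finset.mem_range, Finset.mem_Ico]
      have := hposN v
      omega
    rw [hfil, Nat.card_Ico]
    by_cases hlt : pos u < pos v
    · have h0 : 0 ≤ f u v := hfwd u v hlt
      rw [max_eq_left h0, nsmul_eq_mul, mul_comm]
    · have h0 : pos v - pos u = 0 := by omega
      rw [h0]
      simp
  have hSigma : ∑ u, ∑ v, (max (f u v) 0) * ((pos v - pos u : ℕ) : ℝ) ≤ (n : ℝ) * lam := by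
    have e2 : ∑ i ∈ Finset.range n, ∑ u, ∑ v, (if pos u ≤ i ∧ i < pos v then f u v else 0)
        = ∑ u, ∑ v, (max (f u v) 0) * ((pos v - pos u : ℕ) : ℝ) := by
      rw [Finset.sum_comm]
      refine Finset.sum_congr rfl fun u _ => ?_
      rw [Finset.sum_comm]
      exact Finset.sum_congr rfl fun v _ => key u v
    rw [← e2]
    calc ∑ i ∈ Finset.range n, ∑ u, ∑ v, (if pos u ≤ i ∧ i < pos v then f u v else 0)
        ≤ ∑ _i ∈ Finset.range n, lam := Finset.sum_le_sum fun i _ => hcut_le i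
      _ = (n : ℝ) * lam := by rw [Finset.sum_const, Finset.card_range, nsmul_eq_mul]
  -- the parameter k
  set k : ℕ := ⌈ε⁻¹⌉₊ with hk
  have hεinvpos : (0:ℝ) < ε⁻¹ := inv_pos.mpr hε0
  have hk1 : 1 ≤ k := Nat.one_le_ceil_iff.mpr hεinvpos
  have hkR : (1:ℝ) ≤ (k:ℝ) := by exact_mod_cast hk1
  have hkpos : (0:ℝ) < (k:ℝ) := lt_of_lt_of_le one_pos hkR
  have hkinv : ((k:ℝ))⁻¹ ≤ ε := by
    have h1 : ε⁻¹ ≤ (k:ℝ) := Nat.le_ceil _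
    have h2 : (k:ℝ)⁻¹ ≤ (ε⁻¹)⁻¹ := by
      apply inv_anti₀ hεinvpos h1
    rwa [inv_inv] at h2
  have hεinv1 : (1:ℝ) ≤ ε⁻¹ := by
    rw [le_inv_comm₀] <;> try linarith
  have hkle : (k:ℝ) ≤ 2 * ε⁻¹ := by
    have h1 : (k:ℝ) < ε⁻¹ + 1 := Nat.ceil_lt_add_one (le_of_lt hεinvpos)
    linarith
  -- cardinality of short forward pairs
  set Q : Finset (V × V) := (univ ×ˢ univ).filter
    (fun p => 0 < pos p.2 - pos p.1 ∧ pos p.2 - pos p.1 ≤ k) with hQ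
  have hQcard : Q.card ≤ n * k := by
    have hinj : ∀ p ∈ Q, ∀ q ∈ Q,
        (fun p : V × V => (p.1, pos p.2 - pos p.1 - 1)) p
          = (fun p : V × V => (p.1, pos p.2 - pos p.1 - 1)) q → p = q := by
      intro p hp q hq hpq
      simp only [hQ, Finset.mem_filter] at hp hq
      simp only [Prod.mk.injEq] at hpq
      obtain ⟨h1, h2⟩ := hpq
      have h3 : pos p.2 = pos q.2 := by
        have := hp.2
        have := hq.2
        have h4 : pos p.1 = pos q.1 := by rw [h1]
        omega
      have := hposinj _ _ h3
      exact Prod.ext h1 this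
    have hmaps : ∀ p ∈ Q, (fun p : V × V => (p.1, pos p.2 - pos p.1 - 1)) p
        ∈ (univ ×ˢ Finset.range k : Finset (V × ℕ)) := by
      intro p hp
      simp only [hQ, Finset.mem_filter] at hp
      simp only [Finset.mem_product, Finset.mem_univ, Finset.mem_range, true_and]
      omega
    have := Finset.card_le_card_of_injOn _ hmaps (fun p hp q hq => hinj p hp q hq)
    simpa [Finset.card_product] using this
  -- total flow bound
  have hT : ∑ u, ∑ v, max (f u v) 0
      ≤ ((n * k : ℕ) : ℝ) * (c * ε ^ 2 * (n : ℝ) * W) + ((n : ℝ) * lam) * (k:ℝ)⁻¹ := by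
    have hterm : ∀ u v : V, max (f u v) 0
        ≤ (if 0 < pos v - pos u ∧ pos v - pos u ≤ k then c * ε ^ 2 * (n : ℝ) * W else 0)
          + max (f u v) 0 * ((pos v - pos u : ℕ) : ℝ) * (k:ℝ)⁻¹ := by
      intro u v
      have hg0 : (0:ℝ) ≤ max (f u v) 0 := le_max_right _ _
      by_cases hfpos : 0 < f u v
      · have hlt := hposf u v hfpos
        have hgval : max (f u v) 0 = f u v := max_eq_left (le_of_lt hfpos)
        by_cases hkc : pos v - pos u ≤ k
        · rw [if_pos ⟨by omega, hkc⟩]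
          have hWb : f u v ≤ c * ε ^ 2 * (n : ℝ) * W :=
            le_trans (le_trans (le_abs_self _) (hfcap u v)) (hHcap u v)
          have hrest : 0 ≤ max (f u v) 0 * ((pos v - pos u : ℕ) : ℝ) * (k:ℝ)⁻¹ := by
            apply mul_nonneg (mul_nonneg hg0 (Nat.cast_nonneg _))
            exact inv_nonneg.mpr (le_of_lt hkpos)
          rw [hgval] at hrest ⊢
          linarith
        · rw [if_neg (fun h => hkc h.2)]
          push_neg at hkc
          have hc1 : (k:ℝ) + 1 ≤ ((pos v - pos u : ℕ) : ℝ) := by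
            exact_mod_cast Nat.succ_le_of_lt hkc
          have hone : (1:ℝ) ≤ ((pos v - pos u : ℕ) : ℝ) * (k:ℝ)⁻¹ := by
            rw [← div_eq_mul_inv, le_div_iff₀ hkpos]
            linarith
          have := le_mul_of_one_le_right hg0 hone
          rw [← mul_assoc] at this
          linarith
      · have hgval : max (f u v) 0 = 0 := max_eq_right (le_of_not_gt hfpos)
        rw [hgval]
        have h1 : (0:ℝ) ≤ (if 0 < pos v - pos u ∧ pos v - pos u ≤ k
            then c * ε ^ 2 * (n : ℝ) * W else 0) := by
          split_ifs
          · exact hWH0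
          · exact le_rfl
        simp only [zero_mul]
        linarith
    calc ∑ u, ∑ v, max (f u v) 0
        ≤ ∑ u, ∑ v, ((if 0 < pos v - pos u ∧ pos v - pos u ≤ k
              then c * ε ^ 2 * (n : ℝ) * W else 0)
            + max (f u v) 0 * ((pos v - pos u : ℕ) : ℝ) * (k:ℝ)⁻¹) :=
          Finset.sum_le_sum fun u _ => Finset.sum_le_sum fun v _ => hterm u v
      _ = (∑ u, ∑ v, (if 0 < pos v - pos u ∧ pos v - pos u ≤ k
              then c * ε ^ 2 * (n : ℝ) * W else 0))
          + (∑ u, ∑ v, max (f u v) 0 * ((pos v - pos u : ℕ) : ℝ)) * (k:ℝ)⁻¹ := by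
          simp only [Finset.sum_add_distrib, Finset.sum_mul]
      _ ≤ ((n * k : ℕ) : ℝ) * (c * ε ^ 2 * (n : ℝ) * W) + ((n : ℝ) * lam) * (k:ℝ)⁻¹ := by
          have hA : ∑ u, ∑ v, (if 0 < pos v - pos u ∧ pos v - pos u ≤ k
              then c * ε ^ 2 * (n : ℝ) * W else 0)
              ≤ ((n * k : ℕ) : ℝ) * (c * ε ^ 2 * (n : ℝ) * W) := by
            rw [← Finset.sum_product']
            rw [← Finset.sum_filter, Finset.sum_const, nsmul_eq_mul]
            apply mul_le_mul_of_nonneg_right _ hWH0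
            exact_mod_cast hQcard
          have hB : (∑ u, ∑ v, max (f u v) 0 * ((pos v - pos u : ℕ) : ℝ)) * (k:ℝ)⁻¹
              ≤ ((n : ℝ) * lam) * (k:ℝ)⁻¹ := by
            apply mul_le_mul_of_nonneg_right hSigma
            exact inv_nonneg.mpr (le_of_lt hkpos)
          linarith
  -- simplify the total flow bound
  have hTbound : ∑ u, ∑ v, max (f u v) 0 ≤ (2 * c + 2) * ε * (n : ℝ) ^ 2 * W := by
    have hcast : ((n * k : ℕ) : ℝ) = (n : ℝ) * (k : ℝ) := by push_cast; ring
    have h1 : ((n * k : ℕ) : ℝ) * (c * ε ^ 2 * (n : ℝ) * W) ≤ 2 * c * ε * (n : ℝ) ^ 2 * W := by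
      rw [hcast]
      calc (n : ℝ) * (k : ℝ) * (c * ε ^ 2 * (n : ℝ) * W)
          = (k : ℝ) * (c * ε ^ 2 * (n : ℝ) ^ 2 * W) := by ring
        _ ≤ (2 * ε⁻¹) * (c * ε ^ 2 * (n : ℝ) ^ 2 * W) := by
            apply mul_le_mul_of_nonneg_right hkle (by positivity)
        _ = 2 * c * ε * (n : ℝ) ^ 2 * W := by
            field_simp
    have h2 : ((n : ℝ) * lam) * (k:ℝ)⁻¹ ≤ 2 * ε * (n : ℝ) ^ 2 * W := by
      calc ((n : ℝ) * lam) * (k:ℝ)⁻¹ ≤ ((n : ℝ) * lam) * ε := by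
            apply mul_le_mul_of_nonneg_left hkinv
            exact mul_nonneg (Nat.cast_nonneg _) hlam0
        _ ≤ ((n : ℝ) * (2 * (n : ℝ) * W)) * ε := by
            apply mul_le_mul_of_nonneg_right _ (le_of_lt hε0)
            exact mul_le_mul_of_nonneg_left hlam2 (Nat.cast_nonneg _)
        _ = 2 * ε * (n : ℝ) ^ 2 * W := by ring
    linarith [hT]
  -- sum of |f| cuts over the partition
  have habs : ∑ A ∈ P, cutWeight (fun u v => |f u v|) A
      ≤ 2 * ∑ u, ∑ v, max (f u v) 0 := by
    have step : ∀ A ∈ P, cutWeight (fun u v => |f u v|) A ≤ ∑ u ∈ A, ∑ v, |f u v| := by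
      intro A _
      rw [cutWeight]
      apply Finset.sum_le_sum
      intro u _
      exact Finset.sum_le_sum_of_subset_of_nonneg (Finset.subset_univ _)
        (fun v _ _ => abs_nonneg _)
    have hdisj : (↑P : Set (Finset V)).PairwiseDisjoint id := by
      intro A hA B hB hne
      exact hPdisj A (Finset.mem_coe.mp hA) B (Finset.mem_coe.mp hB) hne
    calc ∑ A ∈ P, cutWeight (fun u v => |f u v|) A
        ≤ ∑ A ∈ P, ∑ u ∈ A, ∑ v, |f u v| := Finset.sum_le_sum step
      _ = ∑ u, ∑ v, |f u v| := by
          have hb := Finset.sum_biUnion (s := P) (t := id)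
            (f := fun u => ∑ v, |f u v|) hdisj
          rw [hPcover] at hb
          exact hb.symm
      _ = 2 * ∑ u, ∑ v, max (f u v) 0 := by
          have habs2 : ∀ u v : V, |f u v| = max (f u v) 0 + max (f v u) 0 := by
            intro u v
            rw [hfskew v u]
            rcases le_total (f u v) 0 with h | h
            · rw [abs_of_nonpos h, max_eq_right h, max_eq_left (neg_nonneg.mpr h)]
              ring
            · rw [abs_of_nonneg h, max_eq_left h, max_eq_right (neg_nonpos.mpr h)]
              ring
          rw [Finset.sum_congr rfl fun u _ => Finset.sum_congr rfl fun v _ => habs2 u v]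
          simp only [Finset.sum_add_distrib]
          have hcomm : ∑ u, ∑ v, max (f v u) 0 = ∑ u, ∑ v, max (f u v) 0 := Finset.sum_comm
          rw [hcomm]
          ring
  -- split cut of H into H' part and |f| part
  have hHsplit : ∀ A : Finset V, cutWeight wH A
      = cutWeight (fun u v => wH u v - |f u v|) A + cutWeight (fun u v => |f u v|) A := by
    intro A
    rw [cutWeight, cutWeight, cutWeight, ← Finset.sum_add_distrib]
    refine Finset.sum_congr rfl fun u _ => ?_
    rw [← Finset.sum_add_distrib]
    exact Finset.sum_congr rfl fun v _ => by ring
  -- sparsifier bound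
  have hGH : ∑ A ∈ P, cutWeight wG A ≤ (3/2) * ∑ A ∈ P, cutWeight wH A := by
    have per : ∀ A ∈ P, cutWeight wG A ≤ (3/2) * cutWeight wH A := by
      intro A _
      have h1 := (hsparse A).1
      have h2 := hcutG0 A
      nlinarith
    calc ∑ A ∈ P, cutWeight wG A ≤ ∑ A ∈ P, (3/2) * cutWeight wH A := Finset.sum_le_sum per
      _ = (3/2) * ∑ A ∈ P, cutWeight wH A := by rw [Finset.mul_sum]
  -- assemble
  have hfinal : ∑ A ∈ P, cutWeight wH A
      ≤ c' * ε * (n : ℝ) ^ 2 + 2 * ((2 * c + 2) * ε * (n : ℝ) ^ 2 * W) := by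
    have hsum : ∑ A ∈ P, cutWeight wH A
        = ∑ A ∈ P, cutWeight (fun u v => wH u v - |f u v|) A
          + ∑ A ∈ P, cutWeight (fun u v => |f u v|) A := by
      rw [← Finset.sum_add_distrib]
      exact Finset.sum_congr rfl fun A _ => hHsplit A
    rw [hsum]
    have h2 : ∑ A ∈ P, cutWeight (fun u v => |f u v|) A
        ≤ 2 * ((2 * c + 2) * ε * (n : ℝ) ^ 2 * W) := by
      calc ∑ A ∈ P, cutWeight (fun u v => |f u v|) A
          ≤ 2 * ∑ u, ∑ v, max (f u v) 0 := habs
        _ ≤ 2 * ((2 * c + 2) * ε * (n : ℝ) ^ 2 * W) := by linarith [hTbound]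
    linarith [hPcut, h2]
  have hW' : c' * ε * (n : ℝ) ^ 2 ≤ c' * ε * (n : ℝ) ^ 2 * W := by
    have h9 : (0:ℝ) ≤ c' * ε * (n : ℝ) ^ 2 * (W - 1) := by
      apply mul_nonneg _ (by linarith)
      positivity
    linarith
  calc ∑ A ∈ P, cutWeight wG A ≤ (3/2) * ∑ A ∈ P, cutWeight wH A := hGH
    _ ≤ (3/2) * (c' * ε * (n : ℝ) ^ 2 + 2 * ((2 * c + 2) * ε * (n : ℝ) ^ 2 * W)) := by
        have h0 : (0:ℝ) ≤ 3/2 := by norm_num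
        exact mul_le_mul_of_nonneg_left hfinal h0
    _ ≤ 2 * (c' + 4 * c + 4) * ε * (n : ℝ) ^ 2 * W := by
        have f1 : (0:ℝ) ≤ c' * ε * (n : ℝ) ^ 2 * W := by positivity
        have f2 : (0:ℝ) ≤ c * ε * (n : ℝ) ^ 2 * W := by positivity
        have f3 : (0:ℝ) ≤ ε * (n : ℝ) ^ 2 * W := by positivity
        linarith [hW']
end
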